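/- On ℝ⁸_{>0} with coordinates (σ₁,…,σ₆,τ₁,τ₂) and the Poisson bracket {f,g} = Σ_{i,j} 2ε_{ij} X_i X_j (∂f/∂X_i)(∂g/∂X_j) (ε as in the Fock–Goncharov structure for the pair of pants: ε_{i7} = (−1)^{i+1}, ε_{i8} = (−1)^{i} for 1 ≤ i ≤ 6, antisymmetric, other entries zero), the functions 𝓘 = (log τ₁ − log τ₂)/4 and 𝓔 = −(1/12)·Σ_{i=1}^{6} (−1)^{i+1} log σ_i satisfy {𝓘, 𝓔} = 1/2 identically. -/

import Mathlib

/-- The ε matrix of the Fock–Goncharov Poisson structure for the pair of pants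
(0-indexed coordinates (X₀,…,X₇) = (σ₁,…,σ₆,τ₁,τ₂)). -/
def fgEps (i j : Fin 8) : ℝ :=
  if i.val ≤ 5 ∧ j.val = 6 then (-1 : ℝ) ^ i.val
  else if i.val ≤ 5 ∧ j.val = 7 then (-1 : ℝ) ^ (i.val + 1)
  else if i.val = 6 ∧ j.val ≤ 5 then -((-1 : ℝ) ^ j.val)
  else if i.val = 7 ∧ j.val ≤ 5 then -((-1 : ℝ) ^ (j.val + 1))
  else 0

/-- The Fock–Goncharov Poisson bracket {f,g}(X) = Σ 2 ε_{ij} X_i X_j ∂_i f ∂_j g. -/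
noncomputable def fgBracket (f g : (Fin 8 → ℝ) → ℝ) (X : Fin 8 → ℝ) : ℝ :=
  ∑ i : Fin 8, ∑ j : Fin 8,
    2 * fgEps i j * X i * X j *
      (fderiv ℝ f X (Pi.single i 1)) * (fderiv ℝ g X (Pi.single j 1))

lemma hlog (X : Fin 8 → ℝ) (hX : ∀ i, 0 < X i) (k : Fin 8) :
    HasFDerivAt (fun Y : Fin 8 → ℝ => Real.log (Y k))
      ((X k)⁻¹ • (ContinuousLinearMap.proj k : (Fin 8 → ℝ) →L[ℝ] ℝ)) X := by
  have h := ((Real.hasDerivAt_log (hX k).ne').hasFDerivAt).comp X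
      (ContinuousLinearMap.proj (R := ℝ) (φ := fun _ : Fin 8 => ℝ) k).hasFDerivAt
  refine HasFDerivAt.congr_fderiv h ?_
  exact ContinuousLinearMap.ext fun v => by simp [mul_comm]

set_option maxHeartbeats 1000000 in
/-- The Hamiltonian functions 𝓘 = (log τ₁ − log τ₂)/4 and
𝓔 = −(1/12) Σᵢ (−1)^{i+1} log σᵢ satisfy {𝓘, 𝓔} = 1/2 identically on the
positive octant. -/
theorem fg_bracket_hexagon_eruption (X : Fin 8 → ℝ) (hX : ∀ i, 0 < X i) :
    fgBracket
      (fun Y => (Real.log (Y 6) - Real.log (Y 7)) / 4)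
      (fun Y => -(1/12) * (Real.log (Y 0) - Real.log (Y 1) + Real.log (Y 2)
        - Real.log (Y 3) + Real.log (Y 4) - Real.log (Y 5)))
      X = 1/2 := by
  have hf0 : HasFDerivAt (fun Y : Fin 8 → ℝ => (Real.log (Y 6) - Real.log (Y 7)) / 4)
      ((4:ℝ)⁻¹ • ((X 6)⁻¹ • (ContinuousLinearMap.proj 6 : (Fin 8 → ℝ) →L[ℝ] ℝ)
        - (X 7)⁻¹ • ContinuousLinearMap.proj 7)) X := by
    simpa [div_eq_mul_inv] using ((hlog X hX 6).sub (hlog X hX 7)).mul_const (4:ℝ)⁻¹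
  have hf := hf0.fderiv
  have hg := ((((((hlog X hX 0).sub (hlog X hX 1)).add (hlog X hX 2)).sub
      (hlog X hX 3)).add (hlog X hX 4)).sub (hlog X hX 5)).const_mul (-(1/12) : ℝ) |>.fderiv
  simp only [Pi.sub_apply, Pi.add_apply] at hg
  rw [fgBracket]
  simp only [hf, hg]
  simp only [Fin.sum_univ_eight, ContinuousLinearMap.smul_apply, ContinuousLinearMap.sub_apply,
    ContinuousLinearMap.add_apply, ContinuousLinearMap.proj_apply, ContinuousLinearMap.coe_smul',
    Pi.smul_apply, smul_eq_mul, Pi.single_apply, Fin.reduceEq, reduceIte,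
    mul_zero, zero_mul, mul_one, one_mul, add_zero, zero_add, sub_zero, zero_sub, neg_zero]
  have v0 : ((0:Fin 8):ℕ) = 0 := rfl
  have v1 : ((1:Fin 8):ℕ) = 1 := rfl
  have v2 : ((2:Fin 8):ℕ) = 2 := rfl
  have v3 : ((3:Fin 8):ℕ) = 3 := rfl
  have v4 : ((4:Fin 8):ℕ) = 4 := rfl
  have v5 : ((5:Fin 8):ℕ) = 5 := rfl
  have v6 : ((6:Fin 8):ℕ) = 6 := rfl
  have v7 : ((7:Fin 8):ℕ) = 7 := rfl
  norm_num [fgEps, v0, v1, v2, v3, v4, v5, v6, v7]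
  have h0 := (hX 0).ne'
  have h1 := (hX 1).ne'
  have h2 := (hX 2).ne'
  have h3 := (hX 3).ne'
  have h4 := (hX 4).ne'
  have h5 := (hX 5).ne'
  have h6 := (hX 6).ne'
  have h7 := (hX 7).ne'
  field_simp
  ring
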